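/- Let φ = (1+√5)/2 be the golden ratio. Then Li₂(1/φ²) = π²/15 - ln²(φ). -/

import Mathlib

open Real MeasureTheory Set Filter Topology intervalIntegral

noncomputable def Li2 (x : ℝ) : ℝ := -∫ t in (0:ℝ)..x, Real.log (1 - t) / t

noncomputable def g (t : ℝ) : ℝ := if t = 0 then -1 else Real.log (1 - t) / t

lemma g_cont {x : ℝ} (hx : x < 1) : ContinuousAt g x := by
  rcases eq_or_ne x 0 with rfl | hx0
  · have hd : HasDerivAt (fun t : ℝ => Real.log (1 - t)) (-1) 0 := by
      have h1 : HasDerivAt (fun t : ℝ => 1 - t) (-1) 0 := by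
        simpa using (hasDerivAt_id (0:ℝ)).const_sub 1
      simpa [Function.comp_def] using (Real.hasDerivAt_log (by norm_num)).comp 0 h1
    have hslope := hasDerivAt_iff_tendsto_slope.1 hd
    have hs : Tendsto g (𝓝[≠] 0) (𝓝 (-1)) := by
      refine hslope.congr' ?_
      filter_upwards [self_mem_nhdsWithin] with t ht
      simp only [mem_compl_iff, mem_singleton_iff] at ht
      simp [slope, g, ht, vsub_eq_sub, mul_comm, div_eq_inv_mul]
    rw [ContinuousAt, ← nhdsNE_sup_pure (0:ℝ), Filter.tendsto_sup]
    refine ⟨by simpa [g] using hs, ?_⟩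
    have := tendsto_pure_nhds g 0
    simpa [g] using this
  · have : ContinuousAt (fun t => Real.log (1 - t) / t) x := by
      refine ContinuousAt.div ?_ continuousAt_id hx0
      exact (Real.continuousAt_log (by intro h; linarith [sub_eq_zero.1 h])).comp
        (continuousAt_const.sub continuousAt_id)
    refine this.congr ?_
    filter_upwards [isOpen_ne.mem_nhds hx0] with t ht
    simp [g, ht]

lemma Li2_eq (x : ℝ) : Li2 x = -∫ t in (0:ℝ)..x, g t := by
  unfold Li2
  congr 1
  refine intervalIntegral.integral_congr_ae ?_
  have h0 : (volume : Measure ℝ) {(0:ℝ)} = 0 := measure_singleton 0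
  filter_upwards [measure_eq_zero_iff_ae_notMem.1 h0] with t ht _
  simp only [mem_singleton_iff] at ht
  simp [g, ht]

lemma g_intble {x y : ℝ} (hx : x < 1) (hy : y < 1) : IntervalIntegrable g volume y x := by
  apply ContinuousOn.intervalIntegrable
  intro t ht
  have ht1 : t < 1 := lt_of_le_of_lt ht.2 (max_lt hy hx)
  exact (g_cont ht1).continuousWithinAt

lemma Li2_hasDerivAt {x : ℝ} (hx : x < 1) : HasDerivAt Li2 (-(g x)) x := by
  have h : HasDerivAt (fun u => ∫ t in (0:ℝ)..u, g t) (g x) x :=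
    (intervalIntegral.integral_hasStrictDerivAt_right (g_intble hx one_pos)
      (ContinuousAt.stronglyMeasurableAtFilter isOpen_Iio (fun y hy => g_cont hy) x hx)
      (g_cont hx)).hasDerivAt
  have := h.neg
  refine this.congr_of_eventuallyEq ?_
  filter_upwards with u
  rw [Li2_eq]
  rfl

lemma Li2_zero : Li2 0 = 0 := by simp [Li2]

lemma const_of {F : ℝ → ℝ} {a b : ℝ} (hab : a ≤ b)
    (h : ∀ x ∈ Icc a b, HasDerivAt F 0 x) : F b = F a := by
  have hc : ContinuousOn F (Icc a b) := fun x hx => (h x hx).continuousAt.continuousWithinAt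
  exact constant_of_has_deriv_right_zero hc
    (fun x hx => (h x (Ico_subset_Icc_self hx)).hasDerivWithinAt) b ⟨hab, le_rfl⟩

lemma g_ne {x : ℝ} (hx : x ≠ 0) : g x = Real.log (1 - x) / x := by simp [g, hx]

lemma Li2_dup {x : ℝ} (h0 : 0 ≤ x) (h1 : x < 1) :
    Li2 x + Li2 (-x) = Li2 (x ^ 2) / 2 := by
  have key : ∀ y ∈ Icc 0 x,
      HasDerivAt (fun z => Li2 z + Li2 (-z) - Li2 (z ^ 2) / 2) 0 y := by
    intro y hy
    obtain ⟨hy0, hyx⟩ := hy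
    have hy1 : y < 1 := lt_of_le_of_lt hyx h1
    have hny1 : -y < 1 := by linarith
    have hsq1 : y ^ 2 < 1 := by nlinarith
    have d1 := Li2_hasDerivAt hy1
    have d2 : HasDerivAt (fun z : ℝ => Li2 (-z)) (-(g (-y)) * (-1)) y :=
      (Li2_hasDerivAt hny1).comp y (hasDerivAt_neg y)
    have hp : HasDerivAt (fun z : ℝ => z ^ 2) (2 * y) y := by
      simpa using hasDerivAt_pow 2 y
    have d3 : HasDerivAt (fun z : ℝ => Li2 (z ^ 2)) (-(g (y ^ 2)) * (2 * y)) y := by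
      have h := HasDerivAt.comp (h₂ := Li2) (h := fun z : ℝ => z ^ 2) y (Li2_hasDerivAt hsq1) hp
      simpa [Function.comp_def] using h
    have E := (d1.add d2).sub (d3.div_const 2)
    refine E.congr_deriv ?_
    rcases eq_or_ne y 0 with rfl | hy0'
    · simp [g]
    · have hyp : 0 < y := lt_of_le_of_ne hy0 (Ne.symm hy0')
      have hsq0 : y ^ 2 ≠ 0 := pow_ne_zero 2 hy0'
      rw [g_ne hy0', g_ne (neg_ne_zero.2 hy0'), g_ne hsq0]
      have hlog : Real.log (1 - y ^ 2) = Real.log (1 - y) + Real.log (1 + y) := by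
        rw [← Real.log_mul (by linarith) (by linarith)]
        ring_nf
      rw [hlog]
      field_simp
      ring
  have := const_of h0 key
  simp only [neg_zero, Li2_zero, ne_eq, OfNat.ofNat_ne_zero, not_false_eq_true, zero_pow] at this
  linarith [this]

lemma Li2_landen {x : ℝ} (h0 : 0 ≤ x) (h1 : x < 1) :
    Li2 x + Li2 (-x / (1 - x)) = -(Real.log (1 - x)) ^ 2 / 2 := by
  have key : ∀ y ∈ Icc 0 x,
      HasDerivAt (fun z => Li2 z + Li2 (-z / (1 - z)) + (Real.log (1 - z)) ^ 2 / 2) 0 y := by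
    intro y hy
    obtain ⟨hy0, hyx⟩ := hy
    have hy1 : y < 1 := lt_of_le_of_lt hyx h1
    have h1y : (0:ℝ) < 1 - y := by linarith
    have h1yne : (1:ℝ) - y ≠ 0 := ne_of_gt h1y
    have hu1 : -y / (1 - y) < 1 := by
      have : -y / (1 - y) ≤ 0 := div_nonpos_of_nonpos_of_nonneg (by linarith) (le_of_lt h1y)
      linarith
    have d1 := Li2_hasDerivAt hy1
    have hu : HasDerivAt (fun z : ℝ => -z / (1 - z)) (-1 / (1 - y) ^ 2) y := by
      have hn : HasDerivAt (fun z : ℝ => -z) (-1) y := hasDerivAt_neg y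
      have hd : HasDerivAt (fun z : ℝ => 1 - z) (-1) y := by
        simpa using (hasDerivAt_id y).const_sub 1
      have := hn.div hd h1yne
      refine this.congr_deriv ?_
      ring
    have d2 : HasDerivAt (fun z : ℝ => Li2 (-z / (1 - z)))
        (-(g (-y / (1 - y))) * (-1 / (1 - y) ^ 2)) y := by
      have h := HasDerivAt.comp (h₂ := Li2) (h := fun z : ℝ => -z / (1 - z)) y
        (Li2_hasDerivAt hu1) hu
      simpa [Function.comp_def] using h
    have hl : HasDerivAt (fun z : ℝ => Real.log (1 - z)) (-(1 - y)⁻¹) y := by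
      have hd : HasDerivAt (fun z : ℝ => 1 - z) (-1) y := by
        simpa using (hasDerivAt_id y).const_sub 1
      have := (Real.hasDerivAt_log h1yne).comp y hd
      simpa [Function.comp_def] using this
    have d3 : HasDerivAt (fun z : ℝ => (Real.log (1 - z)) ^ 2 / 2)
        ((2 * Real.log (1 - y) ^ 1 * (-(1 - y)⁻¹)) / 2) y := (hl.pow 2).div_const 2
    have E := (d1.add d2).add d3
    refine E.congr_deriv ?_
    rcases eq_or_ne y 0 with rfl | hy0'
    · simp [g]
    · have hyp : 0 < y := lt_of_le_of_ne hy0 (Ne.symm hy0')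
      have hune : -y / (1 - y) ≠ 0 := by
        exact div_ne_zero (neg_ne_zero.2 hy0') h1yne
      rw [g_ne hy0', g_ne hune]
      have h1u : 1 - -y / (1 - y) = (1 - y)⁻¹ := by field_simp; ring
      rw [h1u, Real.log_inv]
      field_simp
      ring
  have := const_of h0 key
  simp only [Li2_zero, neg_zero, zero_div, sub_zero, Real.log_one] at this
  norm_num at this
  linarith [this]

lemma g_meas : Measurable g := by
  unfold g
  exact Measurable.ite (measurableSet_eq)
    measurable_const
    ((Real.measurable_log.comp (measurable_const.sub measurable_id)).div measurable_id)

lemma g_nonpos {t : ℝ} (ht : t ∈ Ioc (0:ℝ) 1) : g t ≤ 0 := by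
  rcases eq_or_lt_of_le ht.2 with rfl | ht1
  · simp [g, Real.log_zero]
  · rw [g_ne (ne_of_gt ht.1)]
    apply div_nonpos_of_nonpos_of_nonneg
    · exact Real.log_nonpos (by linarith [ht.1]) (by linarith [ht.1])
    · exact le_of_lt ht.1

lemma g_hasSum {t : ℝ} (ht : t ∈ Ioo (0:ℝ) 1) :
    HasSum (fun n : ℕ => t ^ n / (n + 1)) (-(g t)) := by
  have habs : |t| < 1 := abs_lt.2 ⟨by linarith [ht.1], ht.2⟩
  have h := Real.hasSum_pow_div_log_of_abs_lt_one habs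
  have ht0 : t ≠ 0 := ne_of_gt ht.1
  have h2 := h.div_const t
  rw [g_ne ht0]
  have : (fun n : ℕ => t ^ (n + 1) / (n + 1) / t) = fun n : ℕ => t ^ n / (n + 1) := by
    funext n
    rw [pow_succ]
    field_simp
  rw [this] at h2
  rw [neg_div] at h2
  exact h2

lemma term_lintegral (n : ℕ) :
    ∫⁻ t in Ioo (0:ℝ) 1, ENNReal.ofReal (t ^ n / (n + 1))
      = ENNReal.ofReal (1 / ((n:ℝ) + 1) ^ 2) := by
  have hcont : Continuous (fun t : ℝ => t ^ n / ((n:ℝ) + 1)) :=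
    (continuous_pow n).div_const _
  have hint : IntegrableOn (fun t : ℝ => t ^ n / ((n:ℝ) + 1)) (Ioo 0 1) volume :=
    (hcont.integrableOn_Icc).mono_set Ioo_subset_Icc_self
  rw [← MeasureTheory.ofReal_integral_eq_lintegral_ofReal hint]
  · congr 1
    have h1 : (volume : Measure ℝ).restrict (Ioo (0:ℝ) 1)
        = (volume : Measure ℝ).restrict (Ioc (0:ℝ) 1) :=
      Measure.restrict_congr_set Ioo_ae_eq_Ioc
    rw [h1, ← intervalIntegral.integral_of_le zero_le_one]
    rw [intervalIntegral.integral_div]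
    rw [integral_pow]
    norm_num
    rw [sq]
    rw [div_eq_mul_inv, ← mul_inv]
  · refine (ae_restrict_iff' measurableSet_Ioo).2 ?_
    filter_upwards with t ht
    have h0 := ht.1
    positivity

lemma sum_ofReal_zeta : ∑' n : ℕ, ENNReal.ofReal (1 / ((n:ℝ) + 1) ^ 2)
    = ENNReal.ofReal (Real.pi ^ 2 / 6) := by
  have hz : HasSum (fun n : ℕ => 1 / ((n:ℝ) + 1) ^ 2) (Real.pi ^ 2 / 6) := by
    have h := hasSum_zeta_two
    have h2 : HasSum (fun n : ℕ => (1:ℝ) / ((n + 1 : ℕ):ℝ) ^ 2) (Real.pi ^ 2 / 6) := by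
      refine (hasSum_nat_add_iff (f := fun n : ℕ => (1:ℝ) / (n:ℝ) ^ 2) 1).2 ?_
      have hz0 : (∑ i ∈ Finset.range 1, (1:ℝ) / (i:ℝ) ^ 2) = 0 := by norm_num
      rw [hz0, add_zero]
      exact h
    convert h2 using 2 with n
    push_cast
    ring_nf
  rw [← ENNReal.ofReal_tsum_of_nonneg (fun n => by positivity) hz.summable, hz.tsum_eq]

lemma g_lint : ∫⁻ t in Ioc (0:ℝ) 1, ENNReal.ofReal (-(g t))
    = ENNReal.ofReal (Real.pi ^ 2 / 6) := by
  rw [← Measure.restrict_congr_set Ioo_ae_eq_Ioc]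
  have hpt : ∀ t ∈ Ioo (0:ℝ) 1,
      ENNReal.ofReal (-(g t)) = ∑' n : ℕ, ENNReal.ofReal (t ^ n / (n + 1)) := by
    intro t ht
    rw [← (g_hasSum ht).tsum_eq]
    exact ENNReal.ofReal_tsum_of_nonneg
      (fun n => by have := ht.1; positivity) (g_hasSum ht).summable
  rw [setLIntegral_congr_fun_ae measurableSet_Ioo (Filter.Eventually.of_forall hpt)]
  rw [MeasureTheory.lintegral_tsum (fun n => by
    exact ((measurable_id.pow_const n).div_const _).ennreal_ofReal.aemeasurable)]
  simp_rw [term_lintegral]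
  exact sum_ofReal_zeta

lemma g_integrableOn : IntegrableOn g (Ioc (0:ℝ) 1) volume := by
  refine ⟨(g_meas.aestronglyMeasurable).restrict, ?_⟩
  rw [hasFiniteIntegral_iff_norm]
  have : ∫⁻ t in Ioc (0:ℝ) 1, ENNReal.ofReal ‖g t‖
      = ∫⁻ t in Ioc (0:ℝ) 1, ENNReal.ofReal (-(g t)) := by
    refine setLIntegral_congr_fun_ae measurableSet_Ioc (Filter.Eventually.of_forall ?_)
    intro t ht
    rw [Real.norm_eq_abs, abs_of_nonpos (g_nonpos ht)]
  rw [this, g_lint]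
  exact ENNReal.ofReal_lt_top

lemma Li2_one : Li2 1 = Real.pi ^ 2 / 6 := by
  rw [Li2_eq, intervalIntegral.integral_of_le zero_le_one]
  have h1 : ∫ t in Ioc (0:ℝ) 1, g t = -∫ t in Ioc (0:ℝ) 1, -(g t) := by
    rw [MeasureTheory.integral_neg]; ring
  rw [h1]
  rw [MeasureTheory.integral_eq_lintegral_of_nonneg_ae]
  · rw [g_lint, ENNReal.toReal_ofReal (by positivity)]
    ring
  · refine (ae_restrict_iff' measurableSet_Ioc).2 ?_
    filter_upwards with t ht
    simpa using g_nonpos ht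
  · exact (g_meas.neg.aestronglyMeasurable).restrict

lemma Li2_tendsto : Tendsto Li2 (𝓝[<] (1:ℝ)) (𝓝 (Real.pi ^ 2 / 6)) := by
  have hint : IntervalIntegrable g volume ((0:ℝ) ⊓ 0) ((0:ℝ) ⊔ 1) := by
    simp only [min_self, le_refl, sup_of_le_right zero_le_one]
    exact (intervalIntegrable_iff_integrableOn_Ioc_of_le zero_le_one).2 g_integrableOn
  have hc : ContinuousWithinAt (fun b => ∫ t in (0:ℝ)..b, g t) (Icc (0:ℝ) 1) 1 :=
    intervalIntegral.continuousWithinAt_primitive (measure_singleton 1) hint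
  have hc2 : Tendsto Li2 (𝓝[Icc (0:ℝ) 1] 1) (𝓝 (Li2 1)) := by
    have h2 := hc.neg
    simp only [ContinuousWithinAt] at h2
    rw [show 𝓝 (Li2 1) = 𝓝 (-∫ t in (0:ℝ)..1, g t) by rw [Li2_eq]]
    exact h2.congr fun y => (Li2_eq y).symm
  rw [Li2_one] at hc2
  refine hc2.mono_left ?_
  rw [← nhdsWithin_Ioo_eq_nhdsLT (zero_lt_one)]
  exact nhdsWithin_mono 1 Ioo_subset_Icc_self

lemma Li2_reflection {x : ℝ} (hx0 : 0 < x) (hx1 : x < 1) :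
    Li2 x + Li2 (1 - x) + Real.log x * Real.log (1 - x) = Real.pi ^ 2 / 6 := by
  set F : ℝ → ℝ := fun y => Li2 y + Li2 (1 - y) + Real.log y * Real.log (1 - y) with hF
  have hconst : ∀ z ∈ Ico x 1, F z = F x := by
    intro z hz
    refine const_of hz.1 ?_
    intro y hy
    have hy0 : 0 < y := lt_of_lt_of_le hx0 hy.1
    have hy1 : y < 1 := lt_of_le_of_lt hy.2 hz.2
    have h1y : (0:ℝ) < 1 - y := by linarith
    have d1 := Li2_hasDerivAt hy1
    have hd : HasDerivAt (fun z : ℝ => 1 - z) (-1) y := by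
      simpa using (hasDerivAt_id y).const_sub 1
    have d2 : HasDerivAt (fun z : ℝ => Li2 (1 - z)) (-(g (1 - y)) * (-1)) y := by
      have h := HasDerivAt.comp (h₂ := Li2) (h := fun z : ℝ => 1 - z) y
        (Li2_hasDerivAt (by linarith : 1 - y < 1)) hd
      simpa [Function.comp_def] using h
    have hl : HasDerivAt (fun z : ℝ => Real.log (1 - z)) (-(1 - y)⁻¹) y := by
      have := (Real.hasDerivAt_log (ne_of_gt h1y)).comp y hd
      have h2 : (1 - y)⁻¹ * -1 = -(1 - y)⁻¹ := by ring
      simpa [Function.comp_def, h2] using this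
    have d3 : HasDerivAt (fun z : ℝ => Real.log z * Real.log (1 - z))
        (y⁻¹ * Real.log (1 - y) + Real.log y * (-(1 - y)⁻¹)) y :=
      (Real.hasDerivAt_log (ne_of_gt hy0)).mul hl
    have E := (d1.add d2).add d3
    refine E.congr_deriv ?_
    rw [g_ne (ne_of_gt hy0), g_ne (ne_of_gt h1y)]
    have : (1:ℝ) - (1 - y) = y := by ring
    rw [this]
    field_simp
    ring
  have T1 : Tendsto (fun z : ℝ => Li2 z) (𝓝[<] (1:ℝ)) (𝓝 (Real.pi ^ 2 / 6)) := Li2_tendsto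
  have hsub : Tendsto (fun z : ℝ => 1 - z) (𝓝[<] (1:ℝ)) (𝓝 0) := by
    have : Tendsto (fun z : ℝ => 1 - z) (𝓝 (1:ℝ)) (𝓝 (1 - 1)) :=
      (continuous_const.sub continuous_id).tendsto 1
    simpa using this.mono_left nhdsWithin_le_nhds
  have T2 : Tendsto (fun z : ℝ => Li2 (1 - z)) (𝓝[<] (1:ℝ)) (𝓝 0) := by
    have hc0 : ContinuousAt Li2 0 := (Li2_hasDerivAt one_pos).continuousAt
    have := hc0.tendsto.comp hsub
    simpa [Li2_zero, Function.comp_def] using this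
  have T3 : Tendsto (fun z : ℝ => Real.log z * Real.log (1 - z)) (𝓝[<] (1:ℝ)) (𝓝 0) := by
    have A : Tendsto (fun z : ℝ => (1 - z) * Real.log (1 - z)) (𝓝[<] (1:ℝ)) (𝓝 0) := by
      have hm : Tendsto (fun x : ℝ => x * Real.log x) (𝓝 0) (𝓝 0) := by
        have := Real.continuous_mul_log.tendsto 0
        simpa using this
      exact hm.comp hsub
    have B : Tendsto (fun z : ℝ => Real.log z / (z - 1)) (𝓝[<] (1:ℝ)) (𝓝 1) := by
      have hd := Real.hasDerivAt_log (one_ne_zero)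
      have hs := hasDerivAt_iff_tendsto_slope.1 hd
      have hs2 : Tendsto (slope Real.log 1) (𝓝[<] (1:ℝ)) (𝓝 1) := by
        simpa using hs.mono_left (nhdsWithin_mono 1 (s := Iio 1) fun z hz =>
          (ne_of_lt hz : z ≠ 1))
      refine hs2.congr' ?_
      filter_upwards [self_mem_nhdsWithin] with z hz
      simp [slope, Real.log_one, vsub_eq_sub, div_eq_inv_mul]
    have := (B.mul A).neg
    rw [mul_zero, neg_zero] at this
    refine this.congr' ?_
    filter_upwards [self_mem_nhdsWithin] with z hz
    have hz1 : z - 1 ≠ 0 := by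
      simp only [mem_Iio] at hz; intro h; apply absurd hz; simp [sub_eq_zero.1 h]
    field_simp
    ring
  have hlim : Tendsto F (𝓝[<] (1:ℝ)) (𝓝 (Real.pi ^ 2 / 6)) := by
    have := (T1.add T2).add T3
    simpa using this
  have hlim2 : Tendsto F (𝓝[<] (1:ℝ)) (𝓝 (F x)) := by
    refine tendsto_const_nhds.congr' ?_
    have hmem : Ico x 1 ∈ 𝓝[<] (1:ℝ) := Ico_mem_nhdsLT_of_mem ⟨hx1, le_rfl⟩
    filter_upwards [hmem] with z hz
    exact (hconst z hz).symm
  exact tendsto_nhds_unique hlim2 hlim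

theorem Li2_inv_phi_sq :
    Li2 (1 / ((1 + Real.sqrt 5) / 2) ^ 2)
      = Real.pi ^ 2 / 15 - (Real.log ((1 + Real.sqrt 5) / 2)) ^ 2 := by
  set p : ℝ := (1 + Real.sqrt 5) / 2 with hp
  have h5 : Real.sqrt 5 ^ 2 = 5 := Real.sq_sqrt (by norm_num)
  have h5gt : 2 < Real.sqrt 5 := by nlinarith [Real.sqrt_nonneg 5]
  have hp1 : 1 < p := by rw [hp]; linarith
  have hp0 : 0 < p := by linarith
  have hpn0 : p ≠ 0 := ne_of_gt hp0
  have hp2 : p ^ 2 = p + 1 := by rw [hp]; linear_combination h5 / 4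
  set y : ℝ := 1 / p with hy
  set x : ℝ := 1 / p ^ 2 with hx
  have hy0 : 0 < y := by positivity
  have hy1 : y < 1 := by rw [hy]; rw [div_lt_one hp0]; linarith
  have hxy : x = y ^ 2 := by rw [hx, hy]; field_simp
  have hx0 : 0 < x := by positivity
  have hx1 : x < 1 := by rw [hxy]; nlinarith
  have h1x : 1 - x = y := by
    rw [hx, hy]
    field_simp
    linear_combination hp2
  have harg : -x / (1 - x) = -y := by
    rw [h1x, hxy]
    field_simp [ne_of_gt hy0]
  have hlogy : Real.log y = -Real.log p := by rw [hy, one_div, Real.log_inv]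
  have hlogx : Real.log x = -(2 * Real.log p) := by
    rw [hx, one_div, Real.log_inv, Real.log_pow]
    push_cast; ring
  have hland := Li2_landen (le_of_lt hx0) hx1
  rw [harg, h1x, hlogy] at hland
  have hrefl := Li2_reflection hx0 hx1
  rw [h1x, hlogx, hlogy] at hrefl
  have hdup := Li2_dup (le_of_lt hy0) hy1
  rw [← hxy] at hdup
  nlinarith [hland, hrefl, hdup]
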